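/- Let T be a complete first-order theory and φ(x;y) a straight up maximal partitioned formula in T. Then φ admits Cooper's property 1^(1): for every n<ω there exist a model M ⊨ T and parameters b_0,…,b_{n−1} ∈ M^y and (b_X)_{X⊆n} from M^y such that the definable sets φ(M;b_i) = {a ∈ M^x : M ⊨ φ(a;b_i)} are nonempty and pairwise disjoint, and for every X ⊆ n, φ(M;b_X) = ⋃_{i∈X} φ(M;b_i). -/

import Mathlib

open FirstOrder Language Set

universe u v w

/-- A partitioned formula `φ(x;y)` (object variables `α`, parameter variables `β`)
exhibits the pattern `(C, I)` (indexed by `S`) in the theory `T`. -/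
def ExhibitsPattern {L : FirstOrder.Language.{u, v}} (T : L.Theory) {α β S : Type*}
    (φ : L.Formula (α ⊕ β)) (C I : Set (Set S × Set S)) : Prop :=
  ∃ (M : Theory.ModelType.{u, v, w} T) (b : S → β → M),
    (∀ p ∈ C, ∃ a : α → M,
      (∀ i ∈ p.1, φ.Realize (Sum.elim a (b i))) ∧
      (∀ j ∈ p.2, ¬ φ.Realize (Sum.elim a (b j)))) ∧
    (∀ p ∈ I, ¬ ∃ a : α → M,
      (∀ i ∈ p.1, φ.Realize (Sum.elim a (b i))) ∧
      (∀ j ∈ p.2, ¬ φ.Realize (Sum.elim a (b j))))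

/-- `(C, I)` is a pattern: the condition `(∅, ∅)` is excluded. -/
def IsPattern {S : Type*} (C I : Set (Set S × Set S)) : Prop :=
  (∅, ∅) ∉ C ∧ (∅, ∅) ∉ I

/-- A pattern is exhibitable if some partitioned formula of some complete
first-order theory exhibits it. -/
def Exhibitable {S : Type*} (C I : Set (Set S × Set S)) : Prop :=
  ∃ (L : FirstOrder.Language.{0, 0}) (T : L.Theory) (_ : T.IsComplete) (α β : Type)
    (φ : L.Formula (α ⊕ β)), ExhibitsPattern.{0, 0, 0} T φ C I

/-- `φ(x;y)` is straight up maximal in `T`: it exhibits every exhibitable pattern. -/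
def StraightUpMaximal {L : FirstOrder.Language.{u, v}} (T : L.Theory) {α β : Type*}
    (φ : L.Formula (α ⊕ β)) : Prop :=
  ∀ (n : ℕ) (C I : Set (Set (Fin n) × Set (Fin n))),
    IsPattern C I → Exhibitable C I → ExhibitsPattern.{u, v, w} T φ C I

namespace CooperAux

abbrev Mdl (n : ℕ) : Type := Fin n ⊕ Set (Fin n)

instance (n : ℕ) : LE (Mdl n) :=
  ⟨fun x y => match x with
    | Sum.inl i => y = Sum.inl i ∨ ∃ X, y = Sum.inr X ∧ i ∈ X
    | Sum.inr _ => False⟩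

lemma not_inr_le {n : ℕ} (X : Set (Fin n)) (y : Mdl n) : ¬ (Sum.inr X : Mdl n) ≤ y :=
  fun h => h

lemma le_inl_iff {n : ℕ} (x : Mdl n) (i : Fin n) :
    x ≤ (Sum.inl i : Mdl n) ↔ x = Sum.inl i := by
  cases x with
  | inl k =>
    constructor
    · rintro (h | ⟨X, h, -⟩)
      · cases h; rfl
      · exact absurd h (by simp)
    · rintro h; cases h; exact Or.inl rfl
  | inr X => exact ⟨fun h => absurd h (not_inr_le _ _), fun h => by simp at h⟩

lemma le_inr_iff {n : ℕ} (x : Mdl n) (X : Set (Fin n)) :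
    x ≤ (Sum.inr X : Mdl n) ↔ ∃ i ∈ X, x = Sum.inl i := by
  cases x with
  | inl k =>
    constructor
    · rintro (h | ⟨Y, hY, hk⟩)
      · exact absurd h (by simp)
      · obtain rfl : Y = X := by simpa using hY.symm
        exact ⟨k, hk, rfl⟩
    · rintro ⟨i, hi, h⟩
      obtain rfl : k = i := by simpa using h
      exact Or.inr ⟨X, rfl, hi⟩
  | inr Y =>
    exact ⟨fun h => absurd h (not_inr_le _ _), by rintro ⟨i, -, h⟩; simp at h⟩

instance (n : ℕ) : Language.order.Structure (Mdl n) := Language.orderStructure (Mdl n)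

instance (n : ℕ) : Language.order.OrderedStructure (Mdl n) := ⟨fun _ => Iff.rfl⟩

/-- The formula `x ≤ y` in one object and one parameter variable. -/
def ψ : Language.order.Formula (Unit ⊕ Unit) :=
  Relations.formula₂ leSymb (Term.var (Sum.inl ())) (Term.var (Sum.inr ()))

lemma realize_ψ {n : ℕ} (v : Unit ⊕ Unit → Mdl n) :
    ψ.Realize v ↔ v (Sum.inl ()) ≤ v (Sum.inr ()) := by
  simp [ψ, Formula.realize_rel₂]

end CooperAux

/-- if `φ(x;y)` is straight up maximal in the complete theory `T`, then `φ`
admits Cooper's property `1^(1)`: for every `n` there are parameters whose `φ`-definable sets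
are nonempty and pairwise disjoint, and all unions of them are again `φ`-definable. -/
theorem straightUpMaximal_admits_cooper_one_one
    {L : FirstOrder.Language.{u, v}} (T : L.Theory) (hT : T.IsComplete)
    {α β : Type*} (φ : L.Formula (α ⊕ β))
    (hSM : StraightUpMaximal.{u, v, w} T φ) :
    ∀ n : ℕ,
      ∃ (M : Theory.ModelType.{u, v, w} T) (b : Fin n → β → M)
        (bX : Set (Fin n) → β → M),
        (∀ i : Fin n, {a : α → M | φ.Realize (Sum.elim a (b i))}.Nonempty) ∧
        (∀ i j : Fin n, i ≠ j →
          {a : α → M | φ.Realize (Sum.elim a (b i))} ∩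
            {a : α → M | φ.Realize (Sum.elim a (b j))} = ∅) ∧
        (∀ X : Set (Fin n),
          {a : α → M | φ.Realize (Sum.elim a (bX X))} =
            ⋃ i ∈ X, {a : α → M | φ.Realize (Sum.elim a (b i))}) := by
  intro n
  obtain ⟨m, ⟨e⟩⟩ := Finite.exists_equiv_fin (Fin n ⊕ Set (Fin n))
  -- the pattern
  set C : Set (Set (Fin m) × Set (Fin m)) :=
    {p | ∃ i : Fin n, p = ({e (Sum.inl i)}, ∅)} with hCdef
  set I : Set (Set (Fin m) × Set (Fin m)) :=
    {p | ∃ i j : Fin n, i ≠ j ∧ p = ({e (Sum.inl i), e (Sum.inl j)}, ∅)} ∪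
    {p | ∃ (i : Fin n) (X : Set (Fin n)), i ∈ X ∧ p = ({e (Sum.inl i)}, {e (Sum.inr X)})} ∪
    {p | ∃ X : Set (Fin n), p = ({e (Sum.inr X)}, (fun i => e (Sum.inl i)) '' X)} with hIdef
  have hPat : IsPattern C I := by
    constructor
    · rintro ⟨i, h⟩
      have h1 := congrArg Prod.fst h
      exact Set.singleton_ne_empty _ h1.symm
    · rintro ((⟨i, j, hij, h⟩ | ⟨i, X, hiX, h⟩) | ⟨X, h⟩)
      · have h1 : (∅ : Set (Fin m)) = _ := congrArg Prod.fst h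
        rw [eq_comm, Set.eq_empty_iff_forall_notMem] at h1
        exact h1 (e (Sum.inl i)) (Set.mem_insert _ _)
      · have h1 : (∅ : Set (Fin m)) = _ := congrArg Prod.fst h
        rw [eq_comm, Set.eq_empty_iff_forall_notMem] at h1
        exact h1 (e (Sum.inl i)) (Set.mem_singleton _)
      · have h1 : (∅ : Set (Fin m)) = _ := congrArg Prod.fst h
        rw [eq_comm, Set.eq_empty_iff_forall_notMem] at h1
        exact h1 (e (Sum.inr X)) (Set.mem_singleton _)
  have hEx : Exhibitable C I := by
    haveI : Nonempty (CooperAux.Mdl n) := ⟨Sum.inr ∅⟩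
    refine ⟨Language.order, Language.order.completeTheory (CooperAux.Mdl n),
      completeTheory.isComplete _ _, Unit, Unit, CooperAux.ψ,
      Theory.ModelType.of _ (CooperAux.Mdl n), fun k _ => e.symm k, ?_, ?_⟩
    · rintro p ⟨i, rfl⟩
      refine ⟨fun _ => Sum.inl i, ?_, by simp⟩
      rintro k hk
      rw [Set.mem_singleton_iff] at hk
      subst hk
      dsimp only [Theory.ModelType.of]
      erw [CooperAux.realize_ψ]
      simp [CooperAux.le_inl_iff]
    · rintro p ((⟨i, j, hij, rfl⟩ | ⟨i, X, hiX, rfl⟩) | ⟨X, rfl⟩) <;>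
        rintro ⟨a, hpos, hneg⟩ <;>
        dsimp only [Theory.ModelType.of] at a hpos hneg
      · have h1 := hpos (e (Sum.inl i)) (by simp)
        have h2 := hpos (e (Sum.inl j)) (by simp)
        erw [CooperAux.realize_ψ] at h1 h2
        simp only [Sum.elim_inl, Sum.elim_inr, Equiv.symm_apply_apply,
          CooperAux.le_inl_iff] at h1 h2
        rw [h1] at h2
        exact hij (by simpa using h2)
      · have h1 := hpos (e (Sum.inl i)) (by simp)
        have h2 := hneg (e (Sum.inr X)) (by simp)
        erw [CooperAux.realize_ψ] at h1 h2
        simp only [Sum.elim_inl, Sum.elim_inr, Equiv.symm_apply_apply,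
          CooperAux.le_inl_iff, CooperAux.le_inr_iff] at h1 h2
        exact h2 ⟨i, hiX, h1⟩
      · have h1 := hpos (e (Sum.inr X)) (by simp)
        erw [CooperAux.realize_ψ] at h1
        simp only [Sum.elim_inl, Sum.elim_inr, Equiv.symm_apply_apply,
          CooperAux.le_inr_iff] at h1
        obtain ⟨j, hjX, hj⟩ := h1
        have h2 := hneg (e (Sum.inl j)) ⟨j, hjX, rfl⟩
        erw [CooperAux.realize_ψ] at h2
        simp only [Sum.elim_inl, Sum.elim_inr, Equiv.symm_apply_apply,
          CooperAux.le_inl_iff] at h2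
        exact h2 hj
  obtain ⟨M, b', hC, hI⟩ := hSM m C I hPat hEx
  refine ⟨M, fun i => b' (e (Sum.inl i)), fun X => b' (e (Sum.inr X)), ?_, ?_, ?_⟩
  · intro i
    obtain ⟨a, hpos, -⟩ := hC _ ⟨i, rfl⟩
    exact ⟨a, hpos _ rfl⟩
  · intro i j hij
    rw [Set.eq_empty_iff_forall_notMem]
    rintro a ⟨ha1, ha2⟩
    exact hI _ (Or.inl (Or.inl ⟨i, j, hij, rfl⟩))
      ⟨a, by rintro k (rfl | rfl); exacts [ha1, ha2], by simp⟩
  · intro X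
    ext a
    simp only [Set.mem_setOf_eq, Set.mem_iUnion]
    constructor
    · intro ha
      by_contra h
      push_neg at h
      exact hI _ (Or.inr ⟨X, rfl⟩)
        ⟨a, by rintro k rfl; exact ha, by rintro k ⟨i, hiX, rfl⟩; exact h i hiX⟩
    · rintro ⟨i, hiX, ha⟩
      by_contra h
      exact hI _ (Or.inl (Or.inr ⟨i, X, hiX, rfl⟩))
        ⟨a, by rintro k rfl; exact ha, by rintro k rfl; exact h⟩
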